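/- For n ≥ 2, a permutation σ = a_1...a_n avoids the barred pattern bar132bar4 if and only if a_1 = 1 and a_n = n. Consequently |Av_n(bar132bar4)| = (n-2)!. -/

import Mathlib

/-- `σ` avoids the barred pattern `bar1 3 2 bar4`: every occurrence `a_i a_j` of `21`
extends to an occurrence `a_k a_i a_j a_l` of `1324` with `k < i` and `j < l`. -/
def avoidsBar1324 {n : ℕ} (σ : Equiv.Perm (Fin n)) : Prop :=
  ∀ i j : Fin n, i < j → σ j < σ i →
    ∃ k l : Fin n, k < i ∧ j < l ∧ σ k < σ j ∧ σ i < σ l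

theorem avoidsBar1324_iff (n : ℕ) (hn : 2 ≤ n) :
    (∀ σ : Equiv.Perm (Fin n),
      avoidsBar1324 σ ↔
        σ ⟨0, by omega⟩ = ⟨0, by omega⟩ ∧ σ ⟨n - 1, by omega⟩ = ⟨n - 1, by omega⟩) ∧
    Nat.card {σ : Equiv.Perm (Fin n) // avoidsBar1324 σ} = Nat.factorial (n - 2) := by
  have hz : 0 < n := by omega
  have hm : n - 1 < n := by omega
  set z : Fin n := ⟨0, hz⟩ with hzdef
  set m : Fin n := ⟨n - 1, hm⟩ with hmdef
  have hz0 : (z : ℕ) = 0 := rfl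
  have hm1 : (m : ℕ) = n - 1 := rfl
  have hzm : z ≠ m := Fin.ne_of_val_ne (by show (0:ℕ) ≠ n - 1; omega)
  have key : ∀ σ : Equiv.Perm (Fin n),
      avoidsBar1324 σ ↔ σ z = z ∧ σ m = m := by
    intro σ
    constructor
    · intro h
      constructor
      · by_contra hne
        set j : Fin n := σ.symm z with hjdef
        have hj : σ j = z := σ.apply_symm_apply z
        have hjne : j ≠ z := fun he => hne (he ▸ hj)
        have hjlt : z < j := by
          have : (j : ℕ) ≠ 0 := fun h0 => hjne (Fin.ext h0)
          simp only [Fin.lt_def]; omega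
        have hσlt : σ j < σ z := by
          rw [hj]
          have : σ z ≠ z := hne
          have : (σ z : ℕ) ≠ 0 := fun h0 => this (Fin.ext h0)
          simp only [Fin.lt_def]; omega
        obtain ⟨k, l, hk, -, -, -⟩ := h z j hjlt hσlt
        exact absurd hk (by simp only [Fin.lt_def]; omega)
      · by_contra hne
        set i : Fin n := σ.symm m with hidef
        have hi : σ i = m := σ.apply_symm_apply m
        have hine : i ≠ m := fun he => hne (he ▸ hi)
        have hilt : i < m := by
          have h1 : (i : ℕ) ≠ n - 1 := fun h0 => hine (Fin.ext h0)
          have h2 : (i : ℕ) < n := i.isLt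
          simp only [Fin.lt_def]; omega
        have hσlt : σ m < σ i := by
          rw [hi]
          have h1 : σ m ≠ m := hne
          have h2 : (σ m : ℕ) ≠ n - 1 := fun h0 => h1 (Fin.ext h0)
          have h3 : (σ m : ℕ) < n := (σ m).isLt
          simp only [Fin.lt_def]; omega
        obtain ⟨k, l, -, hl, -, -⟩ := h i m hilt hσlt
        have := l.isLt
        exact absurd hl (by simp only [Fin.lt_def]; omega)
    · rintro ⟨h0, hN⟩ i j hij hji
      refine ⟨z, m, ?_, ?_, ?_, ?_⟩
      · -- z < i
        have : i ≠ z := by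
          intro he
          rw [he, h0] at hji
          exact absurd hji (by simp only [Fin.lt_def]; omega)
        have : (i : ℕ) ≠ 0 := fun h' => this (Fin.ext h')
        simp only [Fin.lt_def]; omega
      · -- j < m
        have hinem : i ≠ m := by
          intro he
          have : (j : ℕ) < n := j.isLt
          have := hij
          rw [he] at this
          simp only [Fin.lt_def] at this
          omega
        have hσim : σ i ≠ m := fun h' => hinem (σ.injective (h'.trans hN.symm))
        have h1 : (σ i : ℕ) ≠ n - 1 := fun h' => hσim (Fin.ext h')
        have h2 : (σ j : ℕ) < (σ i : ℕ) := hji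
        have hjm : j ≠ m := by
          intro he
          rw [he, hN] at hji
          have := (σ i).isLt
          simp only [Fin.lt_def] at hji
          omega
        have : (j : ℕ) ≠ n - 1 := fun h' => hjm (Fin.ext h')
        have := j.isLt
        simp only [Fin.lt_def]; omega
      · -- σ z < σ j
        rw [h0]
        have hjz : j ≠ z := by
          intro he
          rw [he] at hij
          exact absurd hij (by simp only [Fin.lt_def]; omega)
        have hσjz : σ j ≠ z := fun h' => hjz (σ.injective (h'.trans h0.symm))
        have : (σ j : ℕ) ≠ 0 := fun h' => hσjz (Fin.ext h')
        simp only [Fin.lt_def]; omega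
      · -- σ i < σ m
        rw [hN]
        have hinem : i ≠ m := by
          intro he
          have := hij
          rw [he] at this
          have := j.isLt
          simp only [Fin.lt_def] at *
          omega
        have hσim : σ i ≠ m := fun h' => hinem (σ.injective (h'.trans hN.symm))
        have h1 : (σ i : ℕ) ≠ n - 1 := fun h' => hσim (Fin.ext h')
        have := (σ i).isLt
        simp only [Fin.lt_def]; omega
  refine ⟨key, ?_⟩
  have e1 : {σ : Equiv.Perm (Fin n) // avoidsBar1324 σ} ≃
      {σ : Equiv.Perm (Fin n) // σ z = z ∧ σ m = m} :=
    Equiv.subtypeEquivRight key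
  have e2 : {σ : Equiv.Perm (Fin n) // σ z = z ∧ σ m = m} ≃
      {σ : Equiv.Perm (Fin n) // ∀ a, ¬(a ≠ z ∧ a ≠ m) → σ a = a} := by
    apply Equiv.subtypeEquivRight
    intro σ
    constructor
    · rintro ⟨h0, hN⟩ a ha
      push_neg at ha
      by_cases haz : a = z
      · rw [haz, h0]
      · rw [ha haz, hN]
    · intro h
      exact ⟨h z (by simp), h m (by simp)⟩
  have e3 : Equiv.Perm {a : Fin n // a ≠ z ∧ a ≠ m} ≃
      {σ : Equiv.Perm (Fin n) // ∀ a, ¬(a ≠ z ∧ a ≠ m) → σ a = a} :=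
    Equiv.Perm.subtypeEquivSubtypePerm _
  have hcard : Fintype.card {a : Fin n // a ≠ z ∧ a ≠ m} = n - 2 := by
    have hfil : (Finset.univ.filter (fun a : Fin n => a ≠ z ∧ a ≠ m)) =
        Finset.univ \ {z, m} := by
      ext a
      simp [not_or]
    rw [Fintype.card_subtype, hfil, Finset.card_sdiff_of_subset (by simp)]
    rw [Finset.card_univ, Fintype.card_fin]
    rw [Finset.card_insert_of_notMem (by simpa using hzm), Finset.card_singleton]
  calc Nat.card {σ : Equiv.Perm (Fin n) // avoidsBar1324 σ}
      = Nat.card (Equiv.Perm {a : Fin n // a ≠ z ∧ a ≠ m}) :=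
        Nat.card_congr (e1.trans (e2.trans e3.symm))
    _ = Nat.factorial (n - 2) := by
        rw [Nat.card_eq_fintype_card, Fintype.card_perm, hcard]
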